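/- Every deterministic regular guarded language is recognized by a deterministic KAT automaton, obtained via Brzozowski derivatives: for a deterministic regular guarded language L and atom α, exactly one of (1) L_α = ∅, (2) L_α = {ε}, (3) there is a unique p ∈ Σ with L_{αp} ≠ ∅ holds, and the automaton on states { L_w : w ∈ (At·Σ)* } with the induced transition function accepts exactly L. -/

import Mathlib

/-- A guarded string candidate: a list of atoms (sets of tests) and actions. -/
abbrev GList (A T : Type) := List (Set T ⊕ A)

/-- Guarded strings: nonempty alternating sequences starting and ending with an atom. -/
inductive IsGuarded {A T : Type} : GList A T → Prop
  | single (α : Set T) : IsGuarded [Sum.inl α]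
  | cons (α : Set T) (p : A) {l : GList A T} : IsGuarded l →
      IsGuarded (Sum.inl α :: Sum.inr p :: l)

/-- Guarded composition of guarded languages: fuse matching boundary atoms. -/
def gcomp {A T : Type} (L K : Set (GList A T)) : Set (GList A T) :=
  { z | ∃ (w : GList A T) (α : Set T) (x : GList A T),
      w ++ [Sum.inl α] ∈ L ∧ Sum.inl α :: x ∈ K ∧ z = w ++ Sum.inl α :: x }

/-- The language of all length-one guarded strings (all atoms). -/
def atomsLang {A T : Type} : Set (GList A T) := { w | ∃ α : Set T, w = [Sum.inl α] }

/-- Iterated guarded composition. -/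
def gpow {A T : Type} (L : Set (GList A T)) : ℕ → Set (GList A T)
  | 0 => atomsLang
  | n + 1 => gcomp L (gpow L n)

/-- Guarded star. -/
def gstar {A T : Type} (L : Set (GList A T)) : Set (GList A T) := ⋃ n, gpow L n

/-- Boolean (test) expressions over test variables T. -/
inductive BExp (T : Type) where
  | tru : BExp T
  | fls : BExp T
  | var (t : T) : BExp T
  | or (b c : BExp T) : BExp T
  | and (b c : BExp T) : BExp T
  | not (b : BExp T) : BExp T

/-- Satisfaction of a test by an atom (truth assignment). -/
def BExp.holds {T : Type} (α : Set T) : BExp T → Prop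
  | .tru => True
  | .fls => False
  | .var t => t ∈ α
  | .or b c => BExp.holds α b ∨ BExp.holds α c
  | .and b c => BExp.holds α b ∧ BExp.holds α c
  | .not b => ¬ BExp.holds α b

/-- The guarded language of a test. -/
def testLang {A T : Type} (b : BExp T) : Set (GList A T) :=
  { w | ∃ α : Set T, b.holds α ∧ w = [Sum.inl α] }

/-- KAT expressions over actions A and tests T. -/
inductive KExp (A T : Type) where
  | test (b : BExp T) : KExp A T
  | act (p : A) : KExp A T
  | plus (e f : KExp A T) : KExp A T
  | seq (e f : KExp A T) : KExp A T
  | star (e : KExp A T) : KExp A T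

/-- Language semantics of KAT. -/
def lang {A T : Type} : KExp A T → Set (GList A T)
  | .test b => testLang b
  | .act p => { w | ∃ α β : Set T, w = [Sum.inl α, Sum.inr p, Sum.inl β] }
  | .plus e f => lang e ∪ lang f
  | .seq e f => gcomp (lang e) (lang f)
  | .star e => gstar (lang e)

/-- Semantics of a test under a valuation τ on states S. -/
def bsem {T S : Type} (τ : T → Set S) : BExp T → Set S
  | .tru => Set.univ
  | .fls => ∅
  | .var t => τ t
  | .or b c => bsem τ b ∪ bsem τ c
  | .and b c => bsem τ b ∩ bsem τ c
  | .not b => (bsem τ b)ᶜ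

/-- Relational semantics of KAT under an interpretation (S, τ, σ). -/
def rsem {A T S : Type} (τ : T → Set S) (σ : A → S → S → Prop) : KExp A T → S → S → Prop
  | .test b => fun s s' => s = s' ∧ s ∈ bsem τ b
  | .act p => σ p
  | .plus e f => fun s s' => rsem τ σ e s s' ∨ rsem τ σ f s s'
  | .seq e f => fun s s' => ∃ s'', rsem τ σ e s s'' ∧ rsem τ σ f s'' s'
  | .star e => Relation.ReflTransGen (rsem τ σ e)

/-- A relation is a partial function. -/
def Functional {S : Type} (r : S → S → Prop) : Prop :=
  ∀ s s₁ s₂, r s s₁ → r s s₂ → s₁ = s₂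

/-- A KAT expression is deterministic: it maps functional interpretations to functional relations. -/
def DetExp {A T : Type} (e : KExp A T) : Prop :=
  ∀ (S : Type) (τ : T → Set S) (σ : A → S → S → Prop),
    (∀ p, Functional (σ p)) → Functional (rsem τ σ e)

/-- A guarded language is deterministic: no member is a proper prefix of another, and
any two distinct members first differ at an atom. -/
def DetLang {A T : Type} (L : Set (GList A T)) : Prop :=
  ∀ w ∈ L, ∀ x ∈ L, w ≠ x →
    ∃ (l w' x' : GList A T) (α β : Set T), α ≠ β ∧
      w = l ++ Sum.inl α :: w' ∧ x = l ++ Sum.inl β :: x'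

/-- The atom of a state: the set of tests true at it. -/
def atomOf {T S : Type} (τ : T → Set S) (s : S) : Set T := { t | s ∈ τ t }

/-- Labeled paths in an interpretation, together with their induced guarded strings. -/
inductive IsPath {A T S : Type} (τ : T → Set S) (σ : A → S → S → Prop) :
    S → GList A T → S → Prop
  | nil (s : S) : IsPath τ σ s [Sum.inl (atomOf τ s)] s
  | cons {s s' s'' : S} {p : A} {w : GList A T} :
      σ p s s' → IsPath τ σ s' w s'' →
      IsPath τ σ s (Sum.inl (atomOf τ s) :: Sum.inr p :: w) s''

/-- GKAT expressions. -/
inductive GExp (A T : Type) where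
  | assert (b : BExp T) : GExp A T
  | act (p : A) : GExp A T
  | seq (e f : GExp A T) : GExp A T
  | ite (b : BExp T) (e f : GExp A T) : GExp A T
  | whl (b : BExp T) (e : GExp A T) : GExp A T

/-- Language semantics of GKAT. -/
def glang {A T : Type} : GExp A T → Set (GList A T)
  | .assert b => testLang b
  | .act p => { w | ∃ α β : Set T, w = [Sum.inl α, Sum.inr p, Sum.inl β] }
  | .seq e f => gcomp (glang e) (glang f)
  | .ite b e f => gcomp (testLang b) (glang e) ∪ gcomp (testLang b.not) (glang f)
  | .whl b e => gcomp (gstar (gcomp (testLang b) (glang e))) (testLang b.not)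

/-- Output of a deterministic KAT automaton on a state and atom. -/
inductive Out (A Q : Type) where
  | accept : Out A Q
  | reject : Out A Q
  | step (p : A) (q : Q) : Out A Q

/-- Acceptance in a deterministic KAT automaton with transition function δ,
starting from dynamics γ. -/
inductive AccFrom {A T Q : Type} (δ : Q → Set T → Out A Q) :
    (Set T → Out A Q) → GList A T → Prop
  | accept {γ : Set T → Out A Q} {α : Set T} :
      γ α = Out.accept → AccFrom δ γ [Sum.inl α]
  | step {γ : Set T → Out A Q} {α : Set T} {p : A} {q : Q} {w : GList A T} :
      γ α = Out.step p q → AccFrom δ (δ q) w →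
      AccFrom δ γ (Sum.inl α :: Sum.inr p :: w)

/-- Brzozowski derivative of a language with respect to a word. -/
def dl {A T : Type} (L : Set (GList A T)) (u : GList A T) : Set (GList A T) :=
  { x | u ++ x ∈ L }

/-- An atom β over T₁ is 𝔱-consistent with an atom α over T₀. -/
def TConsistent {T₀ T₁ : Type} (𝔱 : T₀ → BExp T₁) (α : Set T₀) (β : Set T₁) : Prop :=
  ∀ t, t ∈ α ↔ (𝔱 t).holds β

/-- Atom-replacement relation induced by a test substitution 𝔱. -/
inductive TRel {A T₀ T₁ : Type} (𝔱 : T₀ → BExp T₁) : GList A T₀ → GList A T₁ → Prop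
  | nil : TRel 𝔱 [] []
  | atom {α : Set T₀} {β : Set T₁} {w : GList A T₀} {x : GList A T₁} :
      TConsistent 𝔱 α β → TRel 𝔱 w x → TRel 𝔱 (Sum.inl α :: w) (Sum.inl β :: x)
  | act {p : A} {w : GList A T₀} {x : GList A T₁} :
      TRel 𝔱 w x → TRel 𝔱 (Sum.inr p :: w) (Sum.inr p :: x)

/-- apply_𝔱 on guarded languages. -/
def applyT {A T₀ T₁ : Type} (𝔱 : T₀ → BExp T₁) (L : Set (GList A T₀)) : Set (GList A T₁) :=
  { x | ∃ w ∈ L, TRel 𝔱 w x }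

/-- Action-replacement relation induced by an action substitution 𝔰: each action is
replaced by a guarded string of 𝔰(p), fused with the surrounding atoms. -/
inductive SRel {A₀ A₁ T : Type} (𝔰 : A₀ → Set (GList A₁ T)) :
    GList A₀ T → GList A₁ T → Prop
  | single (α : Set T) : SRel 𝔰 [Sum.inl α] [Sum.inl α]
  | step {α β : Set T} {p : A₀} {u : GList A₁ T} {w : GList A₀ T} {x : GList A₁ T} :
      Sum.inl α :: u ++ [Sum.inl β] ∈ 𝔰 p →
      SRel 𝔰 (Sum.inl β :: w) (Sum.inl β :: x) →
      SRel 𝔰 (Sum.inl α :: Sum.inr p :: Sum.inl β :: w) (Sum.inl α :: u ++ Sum.inl β :: x)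

/-- apply^𝔰 on guarded languages. -/
def applyS {A₀ A₁ T : Type} (𝔰 : A₀ → Set (GList A₁ T)) (L : Set (GList A₀ T)) :
    Set (GList A₁ T) :=
  { x | ∃ w ∈ L, SRel 𝔰 w x }

/-- Builder for the guarded strings of the language L_k. -/
def buildLk {k : ℕ} : Fin k → Fin k → List (Fin k) → GList (Fin k) (Fin k)
  | cur, act, [] => [Sum.inl {cur}, Sum.inr act, Sum.inl {cur}]
  | cur, act, j :: rest => Sum.inl {cur} :: Sum.inr act :: buildLk j cur rest

/-- The language L_k of Definition 6.2. -/
def Lk (k : ℕ) (hk : 0 < k) : Set (GList (Fin k) (Fin k)) :=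
  { w | ∃ (i : Fin k) (rest : List (Fin k)),
      i ≠ ⟨0, hk⟩ ∧ List.Chain' (· ≠ ·) (i :: rest) ∧ w = buildLk i ⟨0, hk⟩ rest }

/-- k-density of a deterministic KAT automaton transition function. -/
def KDense {A T Q : Type} (δ : Q → Set T → Out A Q) (k : ℕ) : Prop :=
  ∃ (S : Fin k → Set Q) (α : Fin k → Set T) (pa : Q → Fin k → A),
    Function.Injective α ∧
    (∀ i, (S i).Nonempty) ∧
    (∀ i q, q ∈ S i → δ q (α i) = Out.accept) ∧
    (∀ i j q, i ≠ j → q ∈ S i → ∃ q' ∈ S j, δ q (α j) = Out.step (pa q j) q') ∧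
    (∀ i j m q q', q ∈ S i → q' ∈ S j → pa q m = pa q' m → i = j)

/-- The sequence of actions occurring in a guarded string. -/
def actsOf {A T : Type} (w : GList A T) : List A :=
  w.filterMap (fun x => match x with | .inl _ => none | .inr p => some p)

/-- The guarded language of a word over Σ: all guarded strings with that action sequence. -/
def wordLang {A T : Type} (ps : List A) : Set (GList A T) :=
  { w | IsGuarded w ∧ actsOf w = ps }

/-- Test expressions without test variables. -/
def BExp.varFree {T : Type} : BExp T → Prop
  | .tru => True
  | .fls => True
  | .var _ => False
  | .or b c => BExp.varFree b ∧ BExp.varFree c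
  | .and b c => BExp.varFree b ∧ BExp.varFree c
  | .not b => BExp.varFree b

/-- KA expressions: KAT expressions with no test variables. -/
def KExp.testFree {A T : Type} : KExp A T → Prop
  | .test b => b.varFree
  | .act _ => True
  | .plus e f => KExp.testFree e ∧ KExp.testFree f
  | .seq e f => KExp.testFree e ∧ KExp.testFree f
  | .star e => KExp.testFree e

/-! ### Auxiliary lemmas for Statement 10 -/

lemma dl_dl {A T : Type} (L : Set (GList A T)) (u v : GList A T) :
    dl (dl L u) v = dl L (u ++ v) := by
  ext x; simp [dl, List.append_assoc]

lemma guarded_head {A T : Type} {w : GList A T} (h : IsGuarded w) :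
    ∃ α w', w = Sum.inl α :: w' := by
  cases h with
  | single α => exact ⟨α, [], rfl⟩
  | cons α p h => exact ⟨α, _, rfl⟩

lemma guarded_suffix {A T : Type} {w : GList A T} (h : IsGuarded w) :
    ∀ (v x : GList A T) (p : A), w = v ++ Sum.inr p :: x → IsGuarded x := by
  induction h with
  | single α =>
    intro v x p hv
    cases v with
    | nil => simp at hv
    | cons a v' => simp at hv
  | cons α p hl ih =>
    intro v x q hv
    cases v with
    | nil => simp at hv
    | cons a v' =>
      rw [List.cons_append] at hv
      injection hv with h1 h2
      cases v' with
      | nil =>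
        injection h2 with h3 h4
        injection h3 with h5
        rw [← h4]; exact hl
      | cons b v'' =>
        rw [List.cons_append] at h2
        injection h2 with h3 h4
        exact ih v'' x q h4

lemma det_prefix_free {A T : Type} {L : Set (GList A T)} (hd : DetLang L)
    {u : GList A T} {a : Set T ⊕ A} {y : GList A T}
    (h1 : u ∈ L) (h2 : u ++ a :: y ∈ L) : False := by
  have hne : u ≠ u ++ a :: y := by
    intro h
    have := congrArg List.length h
    simp at this
  obtain ⟨l, w', x', α, β, hab, e1, e2⟩ := hd u h1 _ h2 hne
  rw [e1, List.append_assoc] at e2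
  have := List.append_cancel_left e2
  rw [List.cons_append] at this
  injection this with h3 h4
  injection h3 with h5
  exact hab h5

lemma det_first_diff {A T : Type} {L : Set (GList A T)} (hd : DetLang L)
    {u : GList A T} {a b : Set T ⊕ A} {y z : GList A T}
    (h1 : u ++ a :: y ∈ L) (h2 : u ++ b :: z ∈ L) (hab : a ≠ b) :
    ∃ α β : Set T, a = Sum.inl α ∧ b = Sum.inl β := by
  have hne : u ++ a :: y ≠ u ++ b :: z := by
    intro h
    have := List.append_cancel_left h
    injection this with h3 h4
    exact hab h3
  obtain ⟨l, w', x', α, β, hαβ, e1, e2⟩ := hd _ h1 _ h2 hne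
  have hpl : l <+: u ++ a :: y := ⟨_, e1.symm⟩
  have hpu : u <+: u ++ a :: y := ⟨_, rfl⟩
  rcases List.prefix_or_prefix_of_prefix hpl hpu with hp | hp
  · obtain ⟨m, hm⟩ := hp
    subst hm
    rw [List.append_assoc] at e1 e2
    have e1' := List.append_cancel_left e1
    have e2' := List.append_cancel_left e2
    cases m with
    | nil =>
      rw [List.nil_append] at e1' e2'
      injection e1' with f1 f2
      injection e2' with f3 f4
      exact ⟨α, β, f1, f3⟩
    | cons c m' =>
      rw [List.cons_append] at e1' e2'
      injection e1' with f1 f2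
      injection e2' with f3 f4
      injection f1.symm.trans f3 with f5
      exact absurd f5 hαβ
  · obtain ⟨m, hm⟩ := hp
    subst hm
    rw [List.append_assoc] at e1 e2
    have e1' := List.append_cancel_left e1
    have e2' := List.append_cancel_left e2
    cases m with
    | nil =>
      rw [List.nil_append] at e1' e2'
      injection e1' with f1 f2
      injection e2' with f3 f4
      exact ⟨α, β, f1, f3⟩
    | cons c m' =>
      rw [List.cons_append] at e1' e2'
      injection e1' with f1 f2
      injection e2' with f3 f4
      exact absurd (f1.trans f3.symm) hab

open Classical in
/-- The Brzozowski automaton transition function on derivative states. -/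
noncomputable def autoDelta {A T : Type} (L : Set (GList A T)) :
    {K : Set (GList A T) // K ∈ Set.range (dl L)} → Set T →
      Out A {K : Set (GList A T) // K ∈ Set.range (dl L)} := fun K α =>
  if h1 : [Sum.inl α] ∈ K.val then Out.accept
  else if h2 : ∃ p : A, (dl K.val [Sum.inl α, Sum.inr p]).Nonempty then
    Out.step h2.choose ⟨dl K.val [Sum.inl α, Sum.inr h2.choose], by
      obtain ⟨u, hu⟩ := K.2
      exact ⟨u ++ [Sum.inl α, Sum.inr h2.choose], by rw [← dl_dl, hu]⟩⟩
  else Out.reject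

lemma accFrom_sound {A T : Type} (L : Set (GList A T)) :
    ∀ {γ : Set T → Out A {K : Set (GList A T) // K ∈ Set.range (dl L)}}
      {w : GList A T}, AccFrom (autoDelta L) γ w →
      ∀ K, γ = autoDelta L K → w ∈ K.val := by
  intro γ w h
  induction h with
  | accept hγ =>
    intro K hK
    subst hK
    unfold autoDelta at hγ
    split_ifs at hγ with h1 h2
    exact h1
  | step hγ hacc ih =>
    intro K hK
    subst hK
    unfold autoDelta at hγ
    split_ifs at hγ with h1 h2
    injection hγ with hp hq
    have hw := ih _ rfl
    rw [← hq] at hw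
    rw [← hp]
    simpa [dl] using hw

lemma accFrom_complete {A T : Type} {L : Set (GList A T)} (hd : DetLang L) :
    ∀ {w : GList A T}, IsGuarded w → ∀ (u : GList A T), u ++ w ∈ L →
      (∀ x, u ++ x ∈ L → IsGuarded x) →
      AccFrom (autoDelta L) (autoDelta L ⟨dl L u, ⟨u, rfl⟩⟩) w := by
  intro w hw
  induction hw with
  | single α =>
    intro u hmem _
    apply AccFrom.accept
    unfold autoDelta
    rw [dif_pos]
    exact hmem
  | @cons α p l hl ih =>
    intro u hmem hinv
    have hnacc : [Sum.inl α] ∉ (dl L u : Set (GList A T)) := by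
      intro hc
      exact det_prefix_free hd (show (u ++ [Sum.inl α]) ∈ L from hc)
        (show (u ++ [Sum.inl α]) ++ _ :: _ ∈ L by simpa [List.append_assoc] using hmem)
    have hex : ∃ q : A, (dl (↑(⟨dl L u, ⟨u, rfl⟩⟩ :
        {K : Set (GList A T) // K ∈ Set.range (dl L)}))
        [Sum.inl α, Sum.inr q]).Nonempty :=
      ⟨p, l, show [Sum.inl α, Sum.inr p] ++ l ∈ dl L u from hmem⟩
    have hchoose : hex.choose = p := by
      by_contra hne
      obtain ⟨y, hy⟩ := hex.choose_spec
      have hy' : (u ++ [Sum.inl α]) ++ Sum.inr hex.choose :: y ∈ L := by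
        have h5 : [Sum.inl α, Sum.inr hex.choose] ++ y ∈ dl L u := hy
        simpa [dl, List.append_assoc] using h5
      have hm' : (u ++ [Sum.inl α]) ++ Sum.inr p :: l ∈ L := by
        simpa [List.append_assoc] using hmem
      obtain ⟨a, b, ha, hb⟩ := det_first_diff hd hy' hm'
        (fun h => hne (by injection h))
      exact nomatch ha
    have key : autoDelta L ⟨dl L u, ⟨u, rfl⟩⟩ α
        = Out.step p ⟨dl L (u ++ [Sum.inl α, Sum.inr p]),
            ⟨u ++ [Sum.inl α, Sum.inr p], rfl⟩⟩ := by
      unfold autoDelta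
      rw [dif_neg hnacc, dif_pos hex]
      refine congrArg₂ Out.step hchoose (Subtype.ext ?_)
      show dl (dl L u) [Sum.inl α, Sum.inr hex.choose] = _
      rw [hchoose, dl_dl]
    apply AccFrom.step key
    apply ih (u ++ [Sum.inl α, Sum.inr p])
    · simpa [List.append_assoc] using hmem
    · intro x hx
      have hgx : IsGuarded (Sum.inl α :: Sum.inr p :: x) := by
        apply hinv
        simpa [List.append_assoc] using hx
      exact guarded_suffix hgx [Sum.inl α] x p rfl

/-- every deterministic regular guarded language satisfies the Brzozowski
derivative trichotomy and is recognized by a (finite) deterministic KAT automaton. -/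
theorem det_regular_recognized {A T : Type} (L : Set (GList A T))
    (hg : ∀ w ∈ L, IsGuarded w) (hd : DetLang L)
    (hr : (Set.range (dl L)).Finite) :
    (∀ α : Set T,
      (dl L [Sum.inl α] = ∅ ∧ dl L [Sum.inl α] ≠ {[]} ∧
          ¬ ∃! p : A, dl L [Sum.inl α, Sum.inr p] ≠ ∅) ∨
      (dl L [Sum.inl α] ≠ ∅ ∧ dl L [Sum.inl α] = {[]} ∧
          ¬ ∃! p : A, dl L [Sum.inl α, Sum.inr p] ≠ ∅) ∨
      (dl L [Sum.inl α] ≠ ∅ ∧ dl L [Sum.inl α] ≠ {[]} ∧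
          ∃! p : A, dl L [Sum.inl α, Sum.inr p] ≠ ∅)) ∧
    ∃ (Q : Type) (_ : Fintype Q) (δ : Q → Set T → Out A Q) (ι : Set T → Out A Q),
      { w | AccFrom δ ι w } = L := by
  constructor
  · -- trichotomy
    intro α
    by_cases h0 : dl L [Sum.inl α] = ∅
    · left
      refine ⟨h0, ?_, ?_⟩
      · rw [h0]
        intro h
        have : ([] : GList A T) ∈ (∅ : Set (GList A T)) := by rw [h]; rfl
        exact this
      · rintro ⟨p, hp, -⟩
        apply hp
        ext x
        simp only [Set.mem_empty_iff_false, iff_false]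
        intro hx
        have : Sum.inr p :: x ∈ dl L [Sum.inl α] := hx
        rw [h0] at this
        exact this
    · by_cases h1 : ([] : GList A T) ∈ dl L [Sum.inl α]
      · right; left
        have heq : dl L [Sum.inl α] = {[]} := by
          ext x
          simp only [Set.mem_singleton_iff]
          constructor
          · intro hx
            by_contra hne
            cases x with
            | nil => exact hne rfl
            | cons a x' =>
              have h1' : [Sum.inl α] ∈ L := by simpa [dl] using h1
              have hx' : [Sum.inl α] ++ a :: x' ∈ L := hx
              exact det_prefix_free hd h1' hx'
          · rintro rfl; exact h1
        refine ⟨h0, heq, ?_⟩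
        rintro ⟨p, hp, -⟩
        apply hp
        ext x
        simp only [Set.mem_empty_iff_false, iff_false]
        intro hx
        have : Sum.inr p :: x ∈ dl L [Sum.inl α] := hx
        rw [heq] at this
        exact List.cons_ne_nil _ _ this
      · right; right
        refine ⟨h0, ?_, ?_⟩
        · intro h; rw [h] at h1; exact h1 rfl
        · obtain ⟨x, hx⟩ := Set.nonempty_iff_ne_empty.mpr h0
          have hgx : IsGuarded ([Sum.inl α] ++ x) := hg _ hx
          cases x with
          | nil => exact absurd hx h1
          | cons a x' =>
            cases hgx with
            | cons α' p hgl =>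
              refine ⟨p, ?_, ?_⟩
              · intro he
                have : x' ∈ dl L [Sum.inl α, Sum.inr p] := hx
                rw [he] at this
                exact this
              · intro q hq
                obtain ⟨y, hy⟩ := Set.nonempty_iff_ne_empty.mpr hq
                by_contra hne
                have hy' : [Sum.inl α] ++ Sum.inr q :: y ∈ L := hy
                have hx'' : [Sum.inl α] ++ Sum.inr p :: x' ∈ L := hx
                obtain ⟨a', b', ha', -⟩ := det_first_diff hd hy' hx''
                  (fun h => hne (by injection h))
                exact nomatch ha'
  · -- automaton
    refine ⟨{K : Set (GList A T) // K ∈ Set.range (dl L)}, hr.fintype,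
      autoDelta L, autoDelta L ⟨dl L [], ⟨[], rfl⟩⟩, ?_⟩
    ext w
    constructor
    · intro hw
      exact accFrom_sound L hw ⟨dl L [], ⟨[], rfl⟩⟩ rfl
    · intro hw
      exact accFrom_complete hd (hg w hw) [] hw (fun x hx => hg x hx)
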